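/- Let k₁ = e^{iα₁} = a₁ + i b₁ with a₁, b₁ real, a₁² + b₁² = 1, a₁ ≠ 0, b₁ ≠ 0. With c₁ = |c₁| e^{iC₁}, φ₁ = ψ₁ + iψ₂, |c₁| = (2b₁/a₁)·sgn(a₁), and C₁ + ψ₂ − α₁ = π/2, the solution of the 2×2 linear system f(−k₁) = 1 − (c₁ e^{φ₁}/(2k₁)) f(−k₁) + (conj(c₁) e^{conj(φ₁)}/(−k₁ + conj(k₁))) f(conj(k₁)), f(conj(k₁)) = 1 + (c₁ e^{φ₁}/(conj(k₁) − k₁)) f(−k₁) + (conj(c₁) e^{conj(φ₁)}/(2 conj(k₁))) f(conj(k₁)), is f(−k₁) = H₁ + H₂ and f(conj(k₁)) = H₁ − H₂, where H₁ = 1/(1 + e^{2ψ₁} + i(2b₁/a₁) sgn(a₁) e^{ψ₁}) and H₂ = sgn(a₁) e^{ψ₁}/(1 + e^{2ψ₁} + i(2b₁/a₁) sgn(a₁) e^{ψ₁}). -/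

import Mathlib

open Complex

/-- One-soliton linear system for `|k₁| = 1`: with `k₁ = e^{iα₁} = a₁ + i b₁`,
`c₁ = |c₁| e^{iC₁}`, `φ₁ = ψ₁ + iψ₂`, `|c₁| = (2b₁/a₁)·sgn(a₁)` and
`C₁ + ψ₂ − α₁ = π/2`, the solution of the 2×2 linear system is
`f(−k₁) = H₁ + H₂`, `f(conj k₁) = H₁ − H₂`. -/
theorem one_soliton_unit_circle (a₁ b₁ α₁ C₁ ψ₁ ψ₂ : ℝ)
    (ha₁ : a₁ ≠ 0) (hb₁ : b₁ ≠ 0)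
    (k₁ : ℂ) (hk₁ : k₁ = Complex.exp (Complex.I * α₁))
    (hk₁' : k₁ = (a₁ : ℂ) + Complex.I * b₁)
    (sgn : ℝ) (hsgn : sgn = if 0 < a₁ then 1 else -1)
    (c₁ : ℂ) (hc₁ : c₁ = ((2 * b₁ / a₁) * sgn : ℝ) * Complex.exp (Complex.I * C₁))
    (φ₁ : ℂ) (hφ₁ : φ₁ = (ψ₁ : ℂ) + Complex.I * ψ₂)
    (hphase : C₁ + ψ₂ - α₁ = Real.pi / 2)
    (F G : ℂ)
    (heq1 : F = 1 - (c₁ * Complex.exp φ₁ / (2 * k₁)) * F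
              + ((starRingEnd ℂ) c₁ * Complex.exp ((starRingEnd ℂ) φ₁)
                  / (-k₁ + (starRingEnd ℂ) k₁)) * G)
    (heq2 : G = 1 + (c₁ * Complex.exp φ₁ / ((starRingEnd ℂ) k₁ - k₁)) * F
              + ((starRingEnd ℂ) c₁ * Complex.exp ((starRingEnd ℂ) φ₁)
                  / (2 * (starRingEnd ℂ) k₁)) * G)
    (H₁ H₂ : ℂ)
    (hH₁ : H₁ = 1 / (1 + Complex.exp (2 * ψ₁)
              + Complex.I * ((2 * b₁ / a₁) * sgn : ℝ) * Complex.exp (ψ₁ : ℂ)))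
    (hH₂ : H₂ = (sgn : ℂ) * Complex.exp (ψ₁ : ℂ) / (1 + Complex.exp (2 * ψ₁)
              + Complex.I * ((2 * b₁ / a₁) * sgn : ℝ) * Complex.exp (ψ₁ : ℂ))) :
    F = H₁ + H₂ ∧ G = H₁ - H₂ := by
  have hA : (a₁ : ℂ) ≠ 0 := by exact_mod_cast ha₁
  have hB : (b₁ : ℂ) ≠ 0 := by exact_mod_cast hb₁
  have hEpos : 0 < Real.exp ψ₁ := Real.exp_pos ψ₁
  have hE : (Real.exp ψ₁ : ℂ) ≠ 0 := by exact_mod_cast hEpos.ne'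
  -- a² + b² = 1
  have hnorm : Complex.normSq k₁ = 1 := by
    rw [hk₁, Complex.normSq_eq_norm_sq, Complex.norm_exp]; simp
  have habR : a₁^2 + b₁^2 = 1 := by
    rw [hk₁'] at hnorm
    simpa [Complex.normSq_apply, sq] using hnorm
  have hab : (a₁:ℂ)^2 + (b₁:ℂ)^2 = 1 := by exact_mod_cast habR
  have hsR : sgn^2 = 1 := by rw [hsgn]; split_ifs <;> norm_num
  have hs : (sgn:ℂ)^2 = 1 := by exact_mod_cast hsR
  -- key product
  have key1 : c₁ * Complex.exp φ₁
      = Complex.I * ((2*b₁/a₁) * sgn * Real.exp ψ₁ : ℝ) * k₁ := by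
    have hC : (C₁ : ℝ) = α₁ + Real.pi/2 - ψ₂ := by linarith
    rw [hc₁, hφ₁, hC, hk₁]
    rw [show Complex.I * ((α₁ + Real.pi/2 - ψ₂ : ℝ) : ℂ)
        = Complex.I * (Real.pi/2 : ℝ) + (Complex.I * α₁ + (-(Complex.I * ψ₂))) by
      push_cast; ring]
    rw [Complex.exp_add, Complex.exp_add, Complex.exp_add]
    rw [show Complex.exp (Complex.I * (Real.pi/2 : ℝ)) = Complex.I by
      rw [mul_comm, Complex.exp_mul_I]
      push_cast [← Complex.ofReal_cos, ← Complex.ofReal_sin]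
      simp]
    rw [Complex.exp_neg, ← Complex.ofReal_exp]
    push_cast
    field_simp [Complex.exp_ne_zero]
  have hconjk : (starRingEnd ℂ) k₁ = (a₁:ℂ) - Complex.I * b₁ := by
    rw [hk₁']; simp [Complex.conj_ofReal]; ring
  have key2 : (starRingEnd ℂ) c₁ * Complex.exp ((starRingEnd ℂ) φ₁)
      = -Complex.I * ((2*b₁/a₁) * sgn * Real.exp ψ₁ : ℝ) * ((a₁:ℂ) - Complex.I * b₁) := by
    have h := congrArg (starRingEnd ℂ) key1
    rw [map_mul, ← Complex.exp_conj] at h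
    rw [h, map_mul, map_mul, Complex.conj_I, Complex.conj_ofReal, hconjk]
  have hden1 : -k₁ + (starRingEnd ℂ) k₁ = -(2 * Complex.I * b₁) := by
    rw [hconjk, hk₁']; ring
  have hden2 : (starRingEnd ℂ) k₁ - k₁ = -(2 * Complex.I * b₁) := by
    rw [hconjk, hk₁']; ring
  have hk0 : (a₁:ℂ) + Complex.I * b₁ ≠ 0 := by
    rw [← hk₁', hk₁]; exact Complex.exp_ne_zero _
  have hk0' : (a₁:ℂ) - Complex.I * b₁ ≠ 0 := by
    rw [← hconjk]; simp only [ne_eq, map_eq_zero]; rw [hk₁]; exact Complex.exp_ne_zero _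
  rw [key1, key2, hden1, hk₁'] at heq1
  rw [key1, key2, hden2, hconjk, hk₁'] at heq2
  push_cast at heq1 heq2
  field_simp [hk0, hk0', Complex.I_ne_zero] at heq1 heq2
  have hY1 : (a₁:ℂ) * (2 * ((a₁:ℂ) + Complex.I * b₁)) * ((a₁:ℂ) * (2 * Complex.I * b₁)) ≠ 0 :=
    mul_ne_zero (mul_ne_zero hA (mul_ne_zero two_ne_zero hk0))
      (mul_ne_zero hA (mul_ne_zero (mul_ne_zero two_ne_zero Complex.I_ne_zero) hB))
  have hY2 : -((a₁:ℂ) * (2 * Complex.I * b₁) * ((a₁:ℂ) * (2 * ((a₁:ℂ) - Complex.I * b₁)))) ≠ 0 := by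
    apply neg_ne_zero.mpr
    exact mul_ne_zero (mul_ne_zero hA (mul_ne_zero (mul_ne_zero two_ne_zero Complex.I_ne_zero) hB))
      (mul_ne_zero hA (mul_ne_zero two_ne_zero hk0'))
  have hE2' : Complex.exp (2 * (ψ₁:ℂ)) = Complex.exp (ψ₁:ℂ) ^ 2 := by
    rw [two_mul, Complex.exp_add, sq]
  have hD0 : (1 + Complex.exp (2 * (ψ₁:ℂ))
      + Complex.I * ((2 * b₁ / a₁) * sgn : ℝ) * Complex.exp (ψ₁ : ℂ)) ≠ 0 := by
    rw [show Complex.exp (2*(ψ₁:ℂ)) = ((Real.exp (2*ψ₁):ℝ):ℂ) by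
        rw [Complex.ofReal_exp]; norm_cast,
      show Complex.exp ((ψ₁:ℂ)) = ((Real.exp ψ₁:ℝ):ℂ) by rw [Complex.ofReal_exp]]
    intro h
    have h' : 1 + Real.exp (2*ψ₁) = 0 := by
      simpa [-Complex.ofReal_exp, Complex.add_re, Complex.mul_re] using congrArg Complex.re h
    linarith [Real.exp_pos (2*ψ₁)]
  have hW : (4:ℂ) * Complex.I * (a₁:ℂ)^2 * b₁ ≠ 0 :=
    mul_ne_zero (mul_ne_zero (mul_ne_zero (by norm_num : (4:ℂ) ≠ 0) Complex.I_ne_zero) (pow_ne_zero 2 hA)) hB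
  have hDeq : (1 + Complex.exp (2 * (ψ₁:ℂ))
      + Complex.I * ((2 * b₁ / a₁) * sgn : ℝ) * Complex.exp (ψ₁ : ℂ)) * (a₁:ℂ)
      = (a₁:ℂ) + (a₁:ℂ) * Complex.exp (ψ₁:ℂ)^2
        + 2 * Complex.I * b₁ * sgn * Complex.exp (ψ₁:ℂ) := by
    rw [hE2']
    push_cast
    field_simp
  constructor
  · rw [hH₁, hH₂, ← add_div, eq_div_iff hD0]
    apply mul_right_cancel₀ hA
    rw [mul_assoc, hDeq]
    apply mul_left_cancel₀ hW
    linear_combination (4*Complex.I*(a₁:ℂ)*(b₁:ℂ)) * (((a₁:ℂ) + Complex.I*(b₁:ℂ)*(sgn:ℂ)*Complex.exp (ψ₁:ℂ))*heq1 + (sgn:ℂ)*Complex.exp (ψ₁:ℂ)*((a₁:ℂ) - Complex.I*(b₁:ℂ))*heq2) - 4*Complex.I*(a₁:ℂ)^3*(b₁:ℂ)*F*Complex.exp (ψ₁:ℂ)^2*hs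
  · rw [hH₁, hH₂, div_sub_div_same, eq_div_iff hD0]
    apply mul_right_cancel₀ hA
    rw [mul_assoc, hDeq]
    apply mul_left_cancel₀ hW
    linear_combination (4*Complex.I*(a₁:ℂ)*(b₁:ℂ)) * (((a₁:ℂ) + Complex.I*(b₁:ℂ)*(sgn:ℂ)*Complex.exp (ψ₁:ℂ))*heq2 - (sgn:ℂ)*Complex.exp (ψ₁:ℂ)*((a₁:ℂ) + Complex.I*(b₁:ℂ))*heq1) - 4*Complex.I*(a₁:ℂ)^3*(b₁:ℂ)*G*Complex.exp (ψ₁:ℂ)^2*hs
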